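/- Suppose x is a capacity-feasible function in a flow network with n = |N| nodes and d is a labeling that is valid with respect to x and satisfies d(s) ≥ n. Then the residual network G(x) contains no directed path (a walk with pairwise distinct nodes) from s to t. -/

import Mathlib

open Finset

variable {V : Type*}

/-- The excess of node `v` under `x`: total inflow minus total outflow. -/
def excess [Fintype V] (x : V → V → ℝ) (v : V) : ℝ :=
  (∑ j, x j v) - ∑ j, x v j

/-- `x` is capacity-feasible for capacities `u`: `0 ≤ x i j ≤ u i j` on distinct pairs. -/
def IsCapFeasible (u x : V → V → ℝ) : Prop :=
  ∀ i j, i ≠ j → 0 ≤ x i j ∧ x i j ≤ u i j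

/-- A preflow: capacity-feasible with nonnegative excess at every node other than `s`. -/
def IsPreflow [Fintype V] (u : V → V → ℝ) (s : V) (x : V → V → ℝ) : Prop :=
  IsCapFeasible u x ∧ ∀ v, v ≠ s → 0 ≤ excess x v

/-- A flow: capacity-feasible with zero excess at every node other than `s` and `t`. -/
def IsFlow [Fintype V] (u : V → V → ℝ) (s t : V) (x : V → V → ℝ) : Prop :=
  IsCapFeasible u x ∧ ∀ v, v ≠ s → v ≠ t → excess x v = 0

/-- Residual capacity of the pair `(i,j)` with respect to `x`. -/
def res (u x : V → V → ℝ) (i j : V) : ℝ := u i j + x j i - x i j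

/-- A labeling `d` is valid w.r.t. `x`: `d t = 0` and `d i ≤ d j + 1` across residual arcs. -/
def IsValidLabeling [Fintype V] (u x : V → V → ℝ) (t : V) (d : V → ℕ) : Prop :=
  d t = 0 ∧ ∀ i j, i ≠ j → 0 < res u x i j → d i ≤ d j + 1

/-- If a valid labeling has `d s ≥ n`, then the residual network contains no directed
path (walk with pairwise distinct nodes) from `s` to `t`. -/
theorem no_residual_path_of_valid_labeling [Fintype V] (s t : V) (hst : s ≠ t)
    (u : V → V → ℝ) (hu : ∀ i j, i ≠ j → 0 ≤ u i j)
    (x : V → V → ℝ) (hx : IsCapFeasible u x)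
    (d : V → ℕ) (hd : IsValidLabeling u x t d) (hds : Fintype.card V ≤ d s) :
    ¬ ∃ (L : ℕ) (p : Fin (L + 1) → V), Function.Injective p ∧ p 0 = s ∧
        p (Fin.last L) = t ∧ ∀ i : Fin L, 0 < res u x (p i.castSucc) (p i.succ) := by
  rintro ⟨L, p, hinj, h0, hlast, harc⟩
  obtain ⟨ht, hvalid⟩ := hd
  have key : ∀ m, m ≤ L → d (p ⟨L - m, by omega⟩) ≤ m := by
    intro m
    induction m with
    | zero =>
      intro _
      have : (⟨L - 0, by omega⟩ : Fin (L + 1)) = Fin.last L := by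
        ext; simp
      rw [this, hlast, ht]
    | succ m ih =>
      intro hm
      have hmL : m ≤ L := by omega
      let i : Fin L := ⟨L - (m + 1), by omega⟩
      have hcast : (Fin.castSucc i) = (⟨L - (m + 1), by omega⟩ : Fin (L + 1)) := rfl
      have hsucc : (Fin.succ i) = (⟨L - m, by omega⟩ : Fin (L + 1)) := by
        ext; show L - (m + 1) + 1 = L - m; omega
      have hne : p (Fin.castSucc i) ≠ p (Fin.succ i) := by
        intro h
        have := hinj h
        rw [hcast, hsucc] at this
        have := Fin.mk.injEq .. ▸ this
        omega
      have := hvalid _ _ hne (harc i)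
      rw [hcast, hsucc] at this
      calc d (p ⟨L - (m + 1), by omega⟩) ≤ d (p ⟨L - m, by omega⟩) + 1 := this
        _ ≤ m + 1 := by exact Nat.add_le_add_right (ih hmL) 1
  have hds' : d s ≤ L := by
    have := key L le_rfl
    have h0' : (⟨L - L, by omega⟩ : Fin (L + 1)) = 0 := by ext; simp
    rwa [h0', h0] at this
  have hcard : L + 1 ≤ Fintype.card V := by
    simpa using Fintype.card_le_of_injective p hinj
  omega
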